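/- Fix a ∈ k with a ≠ 0 and an integer n ≥ 2. Let V_a be the representation of the super Jordan plane on kⁿ with basis {v1, …, vn} given by X1 v2 = v1, X1 vi = 0 for i ≠ 2, X2 v1 = a·v1, X2 vi = −a·vi + v_{i+1} for 2 ≤ i ≤ n−1, and X2 vn = −a·vn. Then (X1, X2) satisfies the defining relations X1² = 0 and X2²X1 = X1X2² + X1X2X1, and V_a is an indecomposable representation. -/

import Mathlib

/-- A subspace `W` is a submodule for the representation `(X1, X2)` of the super Jordan
plane if it is invariant under both `X1` and `X2`. -/
def IsSubrep {k V : Type*} [Field k] [AddCommGroup V] [Module k V]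
    (X1 X2 : Module.End k V) (W : Submodule k V) : Prop :=
  Submodule.map X1 W ≤ W ∧ Submodule.map X2 W ≤ W

/-- The representation `(X1, X2)` is indecomposable: `V ≠ 0` and `V` is not the direct
sum of two nonzero submodules. -/
def IsIndecomposable {k V : Type*} [Field k] [AddCommGroup V] [Module k V]
    (X1 X2 : Module.End k V) : Prop :=
  Nontrivial V ∧ ¬ ∃ W L : Submodule k V, IsSubrep X1 X2 W ∧ IsSubrep X1 X2 L ∧
    W ≠ ⊥ ∧ L ≠ ⊥ ∧ IsCompl W L

section Aux

variable {k : Type*} [Field k] {n : ℕ}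

lemma endApply_eq_sum' (f : Module.End k (Fin n → k)) (u : Fin n → k) :
    f u = ∑ i, u i • f (Pi.single i 1) := by
  conv_lhs => rw [← Finset.univ_sum_single u]
  rw [map_sum]
  refine Finset.sum_congr rfl fun i _ => ?_
  rw [← map_smul]
  congr 1
  rw [← Pi.single_smul, smul_eq_mul, mul_one]

lemma single_eq_smul_single' (u : Fin n → k) (i : Fin n) :
    Pi.single i (u i) = u i • (Pi.single i 1 : Fin n → k) := by
  rw [← Pi.single_smul, smul_eq_mul, mul_one]

end Aux

/-- The family `𝒱ₐ` (`a ≠ 0`): on `kⁿ` with standard basis `v₀, …, vₙ₋₁` (written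
`v₁, …, vₙ` in the paper), `X1 v₁ = v₀`, `X1 vᵢ = 0` otherwise, `X2 v₀ = a•v₀`,
`X2 vᵢ = -a•vᵢ + vᵢ₊₁` for `1 ≤ i ≤ n-2`, and `X2 vₙ₋₁ = -a•vₙ₋₁`.  It satisfies the
defining relations of the super Jordan plane and is indecomposable. -/
theorem stmt19 (k : Type*) [Field k] [CharZero k] (a : k) (ha : a ≠ 0)
    (n : ℕ) (hn : 2 ≤ n)
    (X1 X2 : Module.End k (Fin n → k))
    (hX1a : X1 (Pi.single (⟨1, by omega⟩ : Fin n) (1 : k)) =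
      (Pi.single (⟨0, by omega⟩ : Fin n) (1 : k) : Fin n → k))
    (hX1b : ∀ i : Fin n, i ≠ ⟨1, by omega⟩ → X1 (Pi.single i (1 : k)) = 0)
    (hX2a : X2 (Pi.single (⟨0, by omega⟩ : Fin n) (1 : k)) =
      a • (Pi.single (⟨0, by omega⟩ : Fin n) (1 : k) : Fin n → k))
    (hX2b : ∀ (i : Fin n) (_ : 1 ≤ i.1) (_ : i.1 ≤ n - 2),
      X2 (Pi.single i (1 : k)) =
        (-a) • (Pi.single i (1 : k) : Fin n → k) +
          (Pi.single (⟨i.1 + 1, by omega⟩ : Fin n) (1 : k) : Fin n → k))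
    (hX2c : X2 (Pi.single (⟨n - 1, by omega⟩ : Fin n) (1 : k)) =
      (-a) • (Pi.single (⟨n - 1, by omega⟩ : Fin n) (1 : k) : Fin n → k)) :
    X1 * X1 = 0 ∧ X2 ^ 2 * X1 = X1 * X2 ^ 2 + X1 * X2 * X1 ∧
      IsIndecomposable X1 X2 := by
  have h0n : (0:ℕ) < n := by omega
  have h1n : (1:ℕ) < n := by omega
  -- coordinate formula for X1
  have hX1u : ∀ u : Fin n → k,
      X1 u = u ⟨1, h1n⟩ • (Pi.single (⟨0, h0n⟩ : Fin n) (1:k) : Fin n → k) := by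
    intro u
    rw [endApply_eq_sum' X1 u]
    rw [Finset.sum_eq_single (⟨1, h1n⟩ : Fin n)]
    · rw [hX1a]
    · intro i _ hne
      rw [hX1b i hne, smul_zero]
    · intro h; exact absurd (Finset.mem_univ _) h
  -- coordinate-1 formula for X2
  have csing : ∀ (i j : Fin n), i.1 ≠ j.1 → ((Pi.single j (1:k) : Fin n → k)) i = 0 :=
    fun i j h => Pi.single_eq_of_ne (fun e => h (congrArg Fin.val e)) _
  have hcoord1 : ∀ u : Fin n → k, (X2 u) ⟨1, h1n⟩ = -a * u ⟨1, h1n⟩ := by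
    intro u
    rw [endApply_eq_sum' X2 u, Finset.sum_apply]
    rw [Finset.sum_eq_single (⟨1, h1n⟩ : Fin n)]
    · by_cases h3 : 3 ≤ n
      · rw [hX2b ⟨1, h1n⟩ (le_refl 1) (show (1:ℕ) ≤ n - 2 by omega)]
        simp only [Pi.add_apply, Pi.smul_apply, smul_eq_mul]
        rw [Pi.single_eq_same, csing _ _ (show (1:ℕ) ≠ 1 + 1 by omega)]
        ring
      · rw [show (⟨1, h1n⟩ : Fin n) = ⟨n-1, by omega⟩ from Fin.ext (show (1:ℕ) = n - 1 by omega),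
          hX2c]
        simp only [Pi.smul_apply, Pi.single_eq_same, smul_eq_mul]
        ring
    · intro i _ hne
      have hine : i.1 ≠ 1 := fun h => hne (Fin.ext h)
      by_cases hi0 : i.1 = 0
      · rw [show i = (⟨0, h0n⟩ : Fin n) from Fin.ext hi0, hX2a]
        simp only [Pi.smul_apply, smul_eq_mul]
        rw [csing _ _ (show (1:ℕ) ≠ 0 by omega)]
        ring
      · by_cases hilt : i.1 ≤ n - 2
        · rw [hX2b i (by omega) hilt]
          simp only [Pi.add_apply, Pi.smul_apply, smul_eq_mul]
          rw [csing _ _ (show (1:ℕ) ≠ i.1 from fun h => hine h.symm),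
            csing _ _ (show (1:ℕ) ≠ i.1 + 1 by omega)]
          ring
        · have hival : i.1 = n - 1 := by omega
          rw [show i = (⟨n-1, by omega⟩ : Fin n) from Fin.ext hival, hX2c]
          simp only [Pi.smul_apply, smul_eq_mul]
          rw [csing _ _ (show (1:ℕ) ≠ n - 1 by omega)]
          ring
    · intro h; exact absurd (Finset.mem_univ _) h
  -- basic coordinates of e0
  have he0c1 : (Pi.single (⟨0, h0n⟩ : Fin n) (1:k) : Fin n → k) ⟨1, h1n⟩ = 0 :=
    csing _ _ (show (1:ℕ) ≠ 0 by omega)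
  have he0c0 : (Pi.single (⟨0, h0n⟩ : Fin n) (1:k) : Fin n → k) ⟨0, h0n⟩ = 1 := Pi.single_eq_same _ _
  -- Relation 1
  have rel1 : X1 * X1 = 0 := by
    refine LinearMap.ext fun u => ?_
    rw [Module.End.mul_apply, hX1u u, map_smul, hX1u (Pi.single (⟨0, h0n⟩ : Fin n) (1:k)),
      he0c1, zero_smul, smul_zero, LinearMap.zero_apply]
  -- Relation 2
  have rel2 : X2 ^ 2 * X1 = X1 * X2 ^ 2 + X1 * X2 * X1 := by
    refine LinearMap.ext fun u => ?_
    simp only [pow_two, Module.End.mul_apply, LinearMap.add_apply]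
    rw [hX1u u, map_smul, map_smul, hX2a, smul_smul, map_smul, hX2a, smul_smul]
    rw [hX1u (X2 (X2 u))]
    rw [hcoord1, hcoord1]
    rw [hX1u ((u ⟨1, h1n⟩ * a) • (Pi.single (⟨0, h0n⟩ : Fin n) (1:k) : Fin n → k))]
    simp only [Pi.smul_apply, he0c1, smul_eq_mul, mul_zero, zero_smul, add_zero, smul_smul]
    ring_nf
  refine ⟨rel1, rel2, ?_, ?_⟩
  · -- Nontrivial
    exact ⟨(Pi.single (⟨0, h0n⟩ : Fin n) (1:k) : Fin n → k), 0, fun h => by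
      have := congrFun h ⟨0, h0n⟩
      rw [he0c0, Pi.zero_apply] at this
      exact one_ne_zero this⟩
  -- the operator N = X2 + a
  set N : Module.End k (Fin n → k) := X2 + a • 1 with hNdef
  have hNapp : ∀ u : Fin n → k, N u = X2 u + a • u := by
    intro u
    rw [hNdef]
    simp [LinearMap.add_apply, LinearMap.smul_apply, Module.End.one_apply]
  have hN0 : N (Pi.single (⟨0, h0n⟩ : Fin n) (1:k)) =
      (2*a) • (Pi.single (⟨0, h0n⟩ : Fin n) (1:k) : Fin n → k) := by
    rw [hNapp, hX2a]
    module
  have hNb : ∀ i : Fin n, ∀ (_ : 1 ≤ i.1) (h2 : i.1 + 1 < n),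
      N (Pi.single i (1:k)) = Pi.single (⟨i.1 + 1, h2⟩ : Fin n) (1:k) := by
    intro i h1 h2
    rw [hNapp, hX2b i h1 (show i.1 ≤ n - 2 by omega)]
    module
  have hNc : N (Pi.single (⟨n-1, by omega⟩ : Fin n) (1:k)) = 0 := by
    rw [hNapp, hX2c]
    module
  -- powers of N on basis vectors with index ≥ 1
  have hNpow : ∀ (m : ℕ) (i : Fin n), 1 ≤ i.1 →
      (N ^ m) (Pi.single i (1:k)) =
        if h : i.1 + m < n then Pi.single (⟨i.1 + m, h⟩ : Fin n) (1:k) else 0 := by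
    intro m
    induction m with
    | zero =>
      intro i hi
      rw [pow_zero, Module.End.one_apply, dif_pos (show i.1 + 0 < n by omega)]
      exact congrArg (fun j : Fin n => (Pi.single j (1:k) : Fin n → k))
        (Fin.ext (show i.1 = i.1 + 0 by omega))
    | succ m ih =>
      intro i hi
      rw [pow_succ, Module.End.mul_apply]
      by_cases h2 : i.1 + 1 < n
      · rw [hNb i hi h2, ih ⟨i.1 + 1, h2⟩ (show (1:ℕ) ≤ i.1 + 1 by omega)]
        by_cases h3 : i.1 + (m+1) < n
        · rw [dif_pos (show (⟨i.1 + 1, h2⟩ : Fin n).1 + m < n from show i.1 + 1 + m < n by omega),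
            dif_pos h3]
          exact congrArg (fun j : Fin n => (Pi.single j (1:k) : Fin n → k))
            (Fin.ext (show i.1 + 1 + m = i.1 + (m + 1) by omega))
        · rw [dif_neg (show ¬ ((⟨i.1 + 1, h2⟩ : Fin n).1 + m < n) from
            show ¬ (i.1 + 1 + m < n) by omega), dif_neg h3]
      · have hie : i = (⟨n-1, by omega⟩ : Fin n) := Fin.ext (show i.1 = n - 1 by omega)
        rw [hie, hNc, map_zero]
        simp only [Fin.val_mk]
        rw [dif_neg (show ¬ (n - 1 + (m+1) < n) by omega)]
  have hNpow0 : ∀ m : ℕ, (N ^ m) (Pi.single (⟨0, h0n⟩ : Fin n) (1:k)) =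
      (2*a)^m • (Pi.single (⟨0, h0n⟩ : Fin n) (1:k) : Fin n → k) := by
    intro m
    induction m with
    | zero => rw [pow_zero, pow_zero, Module.End.one_apply, one_smul]
    | succ m ih =>
      rw [pow_succ, Module.End.mul_apply, hN0, map_smul, ih, smul_smul, ← pow_succ']
  have h2a : (2*a : k) ≠ 0 := by
    simp [ha]
  -- eigenvectors of X2 with eigenvalue a lie in the line spanned by e0
  have heig : ∀ u : Fin n → k, X2 u = a • u →
      u = u ⟨0, h0n⟩ • (Pi.single (⟨0, h0n⟩ : Fin n) (1:k) : Fin n → k) := by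
    intro u hu
    set u' : Fin n → k := u - u ⟨0, h0n⟩ • (Pi.single (⟨0, h0n⟩ : Fin n) (1:k) : Fin n → k) with hu'def
    have hNu' : N u' = (2*a) • u' := by
      rw [hu'def, map_sub, map_smul, hN0, hNapp, hu]
      module
    have hpow : ∀ m : ℕ, (N ^ m) u' = (2*a)^m • u' := by
      intro m
      induction m with
      | zero => rw [pow_zero, pow_zero, Module.End.one_apply, one_smul]
      | succ m ih =>
        rw [pow_succ', Module.End.mul_apply, ih, map_smul, hNu', smul_smul, ← pow_succ]
    have hu'0 : u' ⟨0, h0n⟩ = 0 := by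
      rw [hu'def]
      simp [Pi.single_eq_same]
    have hz : (N ^ (n-1)) u' = 0 := by
      rw [endApply_eq_sum']
      refine Finset.sum_eq_zero fun i _ => ?_
      by_cases hi0 : i.1 = 0
      · rw [show i = (⟨0, h0n⟩ : Fin n) from Fin.ext hi0, hu'0, zero_smul]
      · rw [hNpow (n-1) i (by omega), dif_neg (by omega), smul_zero]
    have hz' : u' = 0 := by
      have h := hpow (n-1)
      rw [hz] at h
      exact (smul_eq_zero.mp h.symm).resolve_left (pow_ne_zero _ h2a)
    have : u - u ⟨0, h0n⟩ • (Pi.single (⟨0, h0n⟩ : Fin n) (1:k) : Fin n → k) = 0 := by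
      rw [← hu'def]; exact hz'
    exact sub_eq_zero.mp this
  -- membership helpers
  have hmem : ∀ (W : Submodule k (Fin n → k)) (f : Module.End k (Fin n → k)),
      Submodule.map f W ≤ W → ∀ x ∈ W, f x ∈ W :=
    fun W f h x hx => h (Submodule.mem_map_of_mem hx)
  have hNmem : ∀ (W : Submodule k (Fin n → k)), IsSubrep X1 X2 W →
      ∀ (m : ℕ), ∀ x ∈ W, (N ^ m) x ∈ W := by
    intro W hW m
    induction m with
    | zero => intro x hx; rw [pow_zero, Module.End.one_apply]; exact hx
    | succ m ih =>
      intro x hx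
      rw [pow_succ', Module.End.mul_apply, hNapp]
      exact Submodule.add_mem _ (hmem W X2 hW.2 _ (ih x hx)) (Submodule.smul_mem _ _ (ih x hx))
  -- key step: a complemented invariant submodule containing e0 has trivial complement
  have key : ∀ W L : Submodule k (Fin n → k), IsSubrep X1 X2 W → IsSubrep X1 X2 L →
      IsCompl W L → Pi.single (⟨0, h0n⟩ : Fin n) (1:k) ∈ W → L = ⊥ := by
    intro W L hW hL hWL h0W
    obtain ⟨w, l, hwW, hlL, hwl⟩ :=
      Submodule.codisjoint_iff_exists_add_eq.mp hWL.codisjoint (Pi.single (⟨1, h1n⟩ : Fin n) (1:k))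
    have hX1sum : X1 w + X1 l = Pi.single (⟨0, h0n⟩ : Fin n) (1:k) := by
      rw [← map_add, hwl, hX1a]
    have hX1lW : X1 l ∈ W := by
      have hli : X1 l = Pi.single (⟨0, h0n⟩ : Fin n) (1:k) - X1 w := by
        rw [← hX1sum]; abel
      rw [hli]
      exact Submodule.sub_mem _ h0W (hmem W X1 hW.1 w hwW)
    have hX1l0 : X1 l = 0 :=
      Submodule.disjoint_def.mp hWL.disjoint _ hX1lW (hmem L X1 hL.1 l hlL)
    have hw1 : w ⟨1, h1n⟩ = 1 := by
      have h2 : X1 w = Pi.single (⟨0, h0n⟩ : Fin n) (1:k) := by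
        rw [← hX1sum, hX1l0, add_zero]
      have h := hX1u w
      rw [h2] at h
      have h' := congrFun h ⟨0, h0n⟩
      simp only [Pi.smul_apply, he0c0, smul_eq_mul, mul_one] at h'
      exact h'.symm
    have hdesc : ∀ m : ℕ, ∀ j : Fin n, n - m ≤ j.1 → Pi.single j (1:k) ∈ W := by
      intro m
      induction m with
      | zero => intro j hj; exact absurd j.2 (by omega)
      | succ m ih =>
        intro j hj
        by_cases hjm : n - m ≤ j.1
        · exact ih j hjm
        · by_cases hj0 : j.1 = 0
          · rw [show j = (⟨0, h0n⟩ : Fin n) from Fin.ext hj0]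
            exact h0W
          · have hj1 : 1 ≤ j.1 := by omega
            have hjlt : j.1 < n := j.2
            set p : ℕ := j.1 - 1 with hp
            have hx : (N ^ p) w ∈ W := hNmem W hW p w hwW
            have hsum : (N ^ p) w = ∑ i, w i • (N ^ p) (Pi.single i 1) := endApply_eq_sum' _ w
            rw [← Finset.add_sum_erase _ _ (Finset.mem_univ (⟨1, h1n⟩ : Fin n))] at hsum
            have ht1 : w ⟨1, h1n⟩ • (N ^ p) (Pi.single (⟨1, h1n⟩ : Fin n) (1:k))
                = Pi.single j (1:k) := by
              rw [hw1, one_smul, hNpow p ⟨1, h1n⟩ (le_refl 1)]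
              rw [dif_pos (show (⟨1, h1n⟩ : Fin n).1 + p < n from show 1 + p < n by omega)]
              exact congrArg (fun j' : Fin n => (Pi.single j' (1:k) : Fin n → k))
                (Fin.ext (show 1 + p = j.1 by omega))
            have hrest : ∑ i ∈ Finset.univ.erase (⟨1, h1n⟩ : Fin n),
                w i • (N ^ p) (Pi.single i 1) ∈ W := by
              refine Submodule.sum_mem _ fun i hi => ?_
              have hine : i.1 ≠ 1 := fun h => (Finset.ne_of_mem_erase hi) (Fin.ext h)
              by_cases hi0 : i.1 = 0
              · rw [show i = (⟨0, h0n⟩ : Fin n) from Fin.ext hi0, hNpow0]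
                exact Submodule.smul_mem _ _ (Submodule.smul_mem _ _ h0W)
              · have hi2 : 2 ≤ i.1 := by omega
                rw [hNpow p i (by omega)]
                by_cases hir : i.1 + p < n
                · rw [dif_pos hir]
                  exact Submodule.smul_mem _ _ (ih ⟨i.1 + p, hir⟩ (show n - m ≤ i.1 + p by omega))
                · rw [dif_neg hir, smul_zero]
                  exact Submodule.zero_mem _
            rw [ht1] at hsum
            have heq : Pi.single j (1:k) = (N ^ p) w -
                ∑ i ∈ Finset.univ.erase (⟨1, h1n⟩ : Fin n), w i • (N ^ p) (Pi.single i 1) := by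
              rw [hsum]; abel
            rw [heq]
            exact Submodule.sub_mem _ hx hrest
    have hWtop : W = ⊤ := by
      rw [Submodule.eq_top_iff']
      intro u
      rw [← Finset.univ_sum_single u]
      refine Submodule.sum_mem _ fun i _ => ?_
      rw [single_eq_smul_single' u i]
      refine Submodule.smul_mem _ _ ?_
      by_cases hi0 : i.1 = 0
      · rw [show i = (⟨0, h0n⟩ : Fin n) from Fin.ext hi0]; exact h0W
      · exact hdesc n i (by omega)
    rw [eq_bot_iff]
    intro x hx
    rw [Submodule.mem_bot]
    exact Submodule.disjoint_def.mp hWL.disjoint x (by rw [hWtop]; trivial) hx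
  -- conclude indecomposability
  rintro ⟨W, L, hW, hL, hW0, hL0, hWL⟩
  obtain ⟨w, l, hwW, hlL, hwl⟩ :=
    Submodule.codisjoint_iff_exists_add_eq.mp hWL.codisjoint (Pi.single (⟨0, h0n⟩ : Fin n) (1:k))
  have hsum : X2 w + X2 l = a • w + a • l := by
    rw [← map_add, hwl, hX2a, ← smul_add, hwl]
  have hX2w : X2 w = a • w := by
    have hWmem : X2 w - a • w ∈ W :=
      Submodule.sub_mem _ (hmem W X2 hW.2 w hwW) (Submodule.smul_mem _ _ hwW)
    have hLmem : X2 w - a • w ∈ L := by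
      have h' : X2 w - a • w = a • l - X2 l := by
        rw [sub_eq_sub_iff_add_eq_add, add_comm (a • l) (a • w)]
        exact hsum
      rw [h']
      exact Submodule.sub_mem _ (Submodule.smul_mem _ _ hlL) (hmem L X2 hL.2 l hlL)
    have := Submodule.disjoint_def.mp hWL.disjoint _ hWmem hLmem
    rwa [sub_eq_zero] at this
  have hX2l : X2 l = a • l := by
    have hLmem : X2 l - a • l ∈ L :=
      Submodule.sub_mem _ (hmem L X2 hL.2 l hlL) (Submodule.smul_mem _ _ hlL)
    have hWmem : X2 l - a • l ∈ W := by
      have h' : X2 l - a • l = a • w - X2 w := by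
        rw [sub_eq_sub_iff_add_eq_add, add_comm (X2 l) (X2 w)]
        exact hsum
      rw [h']
      exact Submodule.sub_mem _ (Submodule.smul_mem _ _ hwW) (hmem W X2 hW.2 w hwW)
    have := Submodule.disjoint_def.mp hWL.disjoint _ hWmem hLmem
    rwa [sub_eq_zero] at this
  have hw := heig w hX2w
  have hl := heig l hX2l
  by_cases hc : w ⟨0, h0n⟩ = 0
  · have hcd : l ⟨0, h0n⟩ = 1 := by
      have h' := congrFun hwl ⟨0, h0n⟩
      simp only [Pi.add_apply, he0c0] at h'
      rw [hc, zero_add] at h'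
      exact h'
    have h0L : Pi.single (⟨0, h0n⟩ : Fin n) (1:k) ∈ L := by
      have hnz : l ⟨0, h0n⟩ ≠ 0 := by rw [hcd]; exact one_ne_zero
      have heq : Pi.single (⟨0, h0n⟩ : Fin n) (1:k) = (l ⟨0, h0n⟩)⁻¹ •
          (l ⟨0, h0n⟩ • (Pi.single (⟨0, h0n⟩ : Fin n) (1:k) : Fin n → k)) := by
        rw [smul_smul, inv_mul_cancel₀ hnz, one_smul]
      rw [heq, ← hl]
      exact Submodule.smul_mem _ _ hlL
    exact hW0 (key L W hL hW hWL.symm h0L)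
  · have h0Wm : Pi.single (⟨0, h0n⟩ : Fin n) (1:k) ∈ W := by
      have heq : Pi.single (⟨0, h0n⟩ : Fin n) (1:k) = (w ⟨0, h0n⟩)⁻¹ •
          (w ⟨0, h0n⟩ • (Pi.single (⟨0, h0n⟩ : Fin n) (1:k) : Fin n → k)) := by
        rw [smul_smul, inv_mul_cancel₀ hc, one_smul]
      rw [heq, ← hw]
      exact Submodule.smul_mem _ _ hwW
    exact hL0 (key W L hW hL hWL h0Wm)
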